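/- Let h be the tetrahedron built from Pascal's triangle t(i,j)=C(i,j). Then because of the overall symmetry, h(i,j,k) = h(i, i-(j+k), k) for all 0 ≤ k ≤ i, 0 ≤ j ≤ i-k; equivalently, Σ_{ℓ=0}^{k} C(2ℓ+i-k, ℓ+j)·C(k,ℓ) = Σ_{ℓ=0}^{k} C(2ℓ+i-k, ℓ+i-j-k)·C(k,ℓ). -/

import Mathlib

def HP : ℕ → ℕ → ℕ → ℕ
  | i, j, 0 => i.choose j
  | i, j, k + 1 => HP (i - 1) j k + HP i j k + HP i (j + 1) k

lemma pascal_sum (k : ℕ) (f : ℕ → ℕ) :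
    ∑ ℓ ∈ Finset.range (k + 2), f ℓ * (k + 1).choose ℓ =
      ∑ ℓ ∈ Finset.range (k + 1), f ℓ * k.choose ℓ +
        ∑ ℓ ∈ Finset.range (k + 1), f (ℓ + 1) * k.choose ℓ := by
  rw [Finset.sum_range_succ' (fun ℓ => f ℓ * (k + 1).choose ℓ)]
  have h1 : ∀ ℓ ∈ Finset.range (k + 1),
      f (ℓ + 1) * (k + 1).choose (ℓ + 1)
        = f (ℓ + 1) * k.choose ℓ + f (ℓ + 1) * k.choose (ℓ + 1) := by
    intro ℓ _; rw [Nat.choose_succ_succ, Nat.mul_add]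
  rw [Finset.sum_congr rfl h1, Finset.sum_add_distrib]
  have h2 : ∑ ℓ ∈ Finset.range (k + 1), f (ℓ + 1) * k.choose (ℓ + 1) + f 0 * (k + 1).choose 0
      = ∑ ℓ ∈ Finset.range (k + 1), f ℓ * k.choose ℓ := by
    have := (Finset.sum_range_succ' (fun ℓ => f ℓ * k.choose ℓ) (k + 1)).symm
    simp only [Nat.choose_zero_right] at this ⊢
    rw [this, Finset.sum_range_succ]
    simp [Nat.choose_succ_self]
  omega

lemma HP_closed (k d j : ℕ) :
    HP (d + k) j k = ∑ ℓ ∈ Finset.range (k + 1), (2 * ℓ + d).choose (ℓ + j) * k.choose ℓ := by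
  induction k generalizing d j with
  | zero => simp [HP]
  | succ k ih =>
    have e1 : d + (k + 1) - 1 = d + k := by omega
    have e2 : d + (k + 1) = (d + 1) + k := by omega
    show HP (d + (k + 1) - 1) j k + HP (d + (k + 1)) j k + HP (d + (k + 1)) (j + 1) k = _
    rw [e1, e2, ih d j, ih (d + 1) j, ih (d + 1) (j + 1)]
    have key : ∀ ℓ, (2 * ℓ + (d + 1)).choose (ℓ + j) * k.choose ℓ
        + (2 * ℓ + (d + 1)).choose (ℓ + (j + 1)) * k.choose ℓ
        = (2 * (ℓ + 1) + d).choose ((ℓ + 1) + j) * k.choose ℓ := by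
      intro ℓ
      have h3 : 2 * (ℓ + 1) + d = (2 * ℓ + (d + 1)) + 1 := by ring
      have h4 : (ℓ + 1) + j = (ℓ + j) + 1 := by ring
      have h5 : ℓ + (j + 1) = (ℓ + j) + 1 := by ring
      rw [h3, h4, h5, Nat.choose_succ_succ, Nat.add_mul]
    rw [pascal_sum k (fun ℓ => (2 * ℓ + d).choose (ℓ + j))]
    have : ∑ ℓ ∈ Finset.range (k + 1), (2 * ℓ + (d + 1)).choose (ℓ + j) * k.choose ℓ
        + ∑ ℓ ∈ Finset.range (k + 1), (2 * ℓ + (d + 1)).choose (ℓ + (j + 1)) * k.choose ℓ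
        = ∑ ℓ ∈ Finset.range (k + 1), (2 * (ℓ + 1) + d).choose ((ℓ + 1) + j) * k.choose ℓ := by
      rw [← Finset.sum_add_distrib]
      exact Finset.sum_congr rfl (fun ℓ _ => key ℓ)
    omega

theorem stmt_15 (i j k : ℕ) (hk : k ≤ i) (hj : j ≤ i - k) :
    HP i j k = HP i (i - (j + k)) k ∧
      ∑ ℓ ∈ Finset.range (k + 1), (2 * ℓ + i - k).choose (ℓ + j) * k.choose ℓ =
        ∑ ℓ ∈ Finset.range (k + 1), (2 * ℓ + i - k).choose (ℓ + (i - j - k)) * k.choose ℓ := by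
  set d := i - k with hd
  have hi : i = d + k := by omega
  have hj' : j ≤ d := by omega
  have sym : ∀ ℓ j', j' ≤ d →
      (2 * ℓ + d).choose (ℓ + j') = (2 * ℓ + d).choose (ℓ + (d - j')) := by
    intro ℓ j' h
    have : ℓ + (d - j') = (2 * ℓ + d) - (ℓ + j') := by omega
    rw [this, Nat.choose_symm (by omega)]
  constructor
  · rw [hi, HP_closed, HP_closed]
    have : d + k - (j + k) = d - j := by omega
    rw [this]
    exact Finset.sum_congr rfl (fun ℓ _ => by rw [sym ℓ j hj'])
  · have e : ∀ ℓ : ℕ, 2 * ℓ + i - k = 2 * ℓ + d := fun ℓ => by omega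
    have e2 : i - j - k = d - j := by omega
    simp only [e, e2]
    exact Finset.sum_congr rfl (fun ℓ _ => by rw [sym ℓ j hj'])
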